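/- Suppose the only observed action is that consumer i purchased product h from market M (satisfying Independence and Invariance, no ties in values). Then the partial-ranking characterization of optimality implies that the purchased product has the highest effective value: w_h > w_k for all k ∈ M \ {h}, where w_j = min(z_j, u_j) is the effective value. Conversely, if w_h > w_k for all k ≠ h, there exists an optimal search process (under the Gittins index policy) ending in the purchase of h. -/

import Mathlib

/-- An action in the baseline sequential search model over `n` products:
inspect a product or purchase an (already inspected) product. -/
inductive SearchAction (n : ℕ) where
  | inspect (j : Fin n)
  | purchase (j : Fin n)
deriving DecidableEq

namespace SearchAction

/-- The Gittins index of an action: the reservation value for an inspection,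
the purchase value for a purchase. -/
def val {n : ℕ} (z u : Fin n → ℝ) : SearchAction n → ℝ
  | inspect j => z j
  | purchase j => u j

/-- Availability of an action given the list `prev` of previously selected
actions: an inspection is available iff not yet taken; a purchase is available
iff the product has been inspected and not yet purchased. -/
def available {n : ℕ} (prev : List (SearchAction n)) : SearchAction n → Prop
  | inspect j => inspect j ∉ prev
  | purchase j => inspect j ∈ prev ∧ purchase j ∉ prev

/-- A realized search process ending in the purchase of `h`: every selected
action is available when selected, every action selected at each step has the
highest Gittins index among available actions (the Gittins index policy), all
steps but the last are inspections, and the last step purchases `h`. -/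
def IsOptimalSearchEndingIn {n : ℕ} (z u : Fin n → ℝ) (h : Fin n)
    (seq : List (SearchAction n)) : Prop :=
  seq ≠ [] ∧
  (∀ t : Fin seq.length, available (seq.take t) (seq.get t)) ∧
  (∀ t : Fin seq.length, ∀ a, available (seq.take t) a →
      val z u a ≤ val z u (seq.get t)) ∧
  (∀ t : Fin seq.length, (t : ℕ) < seq.length - 1 →
      ∃ j, seq.get t = inspect j) ∧
  seq.getLast? = some (purchase h)

end SearchAction

namespace SearchAction

variable {n : ℕ}

lemma mem_map_inspect {l : List (Fin n)} {j : Fin n} :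
    inspect j ∈ l.map inspect ↔ j ∈ l := by
  simp only [List.mem_map]
  constructor
  · rintro ⟨a, ha, hij⟩; cases hij; exact ha
  · intro hj; exact ⟨j, hj, rfl⟩

lemma purchase_not_mem_map_inspect {l : List (Fin n)} {j : Fin n} :
    purchase j ∉ l.map inspect := by
  simp only [List.mem_map]; rintro ⟨a, -, hij⟩; cases hij

lemma construction (z u : Fin n → ℝ) (h : Fin n) (l : List (Fin n))
    (hsort : l.Pairwise (fun a b => z b < z a))
    (hmemh : h ∈ l)
    (hgt : ∀ k ∈ l, k ≠ h → min (z h) (u h) < z k ∧ u k < min (z h) (u h))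
    (hout : ∀ k : Fin n, k ∉ l → z k < min (z h) (u h)) :
    IsOptimalSearchEndingIn z u h (l.map inspect ++ [purchase h]) := by
  classical
  set w := min (z h) (u h) with hw
  set seq := l.map inspect ++ [purchase h] with hseq
  have hlen : seq.length = l.length + 1 := by simp [hseq]
  have hget_lt : ∀ (t : ℕ) (ht : t < l.length),
      seq[t]'(by omega) = inspect (l[t]'ht) := by
    intro t ht
    simp only [hseq]
    rw [List.getElem_append_left (by simpa using ht)]
    simp
  have hget_last : seq[l.length]'(by omega) = purchase h := by
    simp only [hseq]
    rw [List.getElem_append_right (by simp)]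
    simp
  have htake : ∀ t : ℕ, t ≤ l.length → seq.take t = (l.take t).map inspect := by
    intro t ht
    rw [hseq, List.take_append_of_le_length (by simpa using ht), List.map_take]
  have hpair := List.pairwise_iff_getElem.mp hsort
  have hzle : ∀ k ∈ l, w ≤ z k := by
    intro k hkl
    by_cases hkh : k = h
    · subst hkh; exact min_le_left _ _
    · exact ((hgt k hkl hkh).1).le
  have htake_gt : ∀ (t : ℕ) (ht : t < l.length), ∀ k ∈ l.take t,
      z (l[t]'ht) < z k := by
    intro t ht k hk
    obtain ⟨i, hi, hik⟩ := List.mem_take_iff_getElem.mp hk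
    have hi2 : i < l.length := lt_of_lt_of_le hi (min_le_right _ _)
    have hit : i < t := lt_of_lt_of_le hi (min_le_left _ _)
    have := hpair i t hi2 ht hit
    rwa [hik] at this
  have hne_take : ∀ (t : ℕ) (ht : t < l.length), (l[t]'ht) ∉ l.take t := by
    intro t ht hmem
    exact absurd (htake_gt t ht _ hmem) (lt_irrefl _)
  have hdrop : ∀ (t : ℕ) (ht : t < l.length), ∀ k ∈ l, k ∉ l.take t →
      z k ≤ z (l[t]'ht) := by
    intro t ht k hkl hknt
    obtain ⟨i, hi, hik⟩ := List.getElem_of_mem hkl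
    rcases lt_trichotomy i t with hit | hit | hit
    · exfalso
      apply hknt
      have : (l.take t)[i]'(by simp; omega) = k := by
        rw [List.getElem_take]; exact hik
      rw [← this]; exact List.getElem_mem _
    · subst hit; rw [hik]
    · have := hpair t i ht hi hit
      rw [hik] at this; exact this.le
  refine ⟨by simp [hseq], ?_, ?_, ?_, by rw [hseq]; exact List.getLast?_concat⟩
  · -- availability
    intro t
    have htl : (t : ℕ) < l.length + 1 := by rw [← hlen]; exact t.isLt
    rw [List.get_eq_getElem]
    rcases lt_or_eq_of_le (Nat.lt_succ_iff.mp htl) with ht | ht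
    · rw [hget_lt t ht, htake t ht.le]
      show inspect _ ∉ _
      rw [mem_map_inspect]
      exact hne_take t ht
    · have hg : seq[(t:ℕ)]'t.isLt = purchase h := by
        simp only [ht]; exact hget_last
      rw [hg, htake _ (le_of_eq ht), ht, List.take_length]
      exact ⟨mem_map_inspect.mpr hmemh, purchase_not_mem_map_inspect⟩
  · -- greedy
    intro t a ha
    have htl : (t : ℕ) < l.length + 1 := by rw [← hlen]; exact t.isLt
    rw [List.get_eq_getElem]
    rcases lt_or_eq_of_le (Nat.lt_succ_iff.mp htl) with ht | ht
    · rw [htake t ht.le] at ha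
      rw [hget_lt t ht]
      have hmem : l[(t:ℕ)]'ht ∈ l := List.getElem_mem _
      cases a with
      | inspect k =>
        have hknt : k ∉ l.take t := fun hk => ha (mem_map_inspect.mpr hk)
        show z k ≤ z _
        by_cases hkl : k ∈ l
        · exact hdrop t ht k hkl hknt
        · exact le_of_lt (lt_of_lt_of_le (hout k hkl) (hzle _ hmem))
      | purchase k =>
        obtain ⟨hk1, -⟩ := ha
        have hkt : k ∈ l.take t := mem_map_inspect.mp hk1
        have hkl : k ∈ l := List.mem_of_mem_take hkt
        have hkne : k ≠ l[(t:ℕ)]'ht := by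
          rintro rfl; exact hne_take t ht hkt
        show u k ≤ z _
        by_cases hkh : k = h
        · have hkt' : h ∈ l.take t := hkh ▸ hkt
          have h1 : z (l[(t:ℕ)]'ht) < z h := htake_gt t ht _ hkt'
          have h2 : w < z (l[(t:ℕ)]'ht) :=
            (hgt _ hmem (fun he => hkne (hkh.trans he.symm))).1
          have h3 : u h ≤ z (l[(t:ℕ)]'ht) := by
            rcases le_total (u h) (z h) with hc | hc
            · rw [hw, min_eq_right hc] at h2; exact h2.le
            · rw [hw, min_eq_left hc] at h2; linarith
          rw [hkh]; exact h3
        · exact le_of_lt (lt_of_lt_of_le (hgt k hkl hkh).2 (hzle _ hmem))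
    · have hg : seq[(t:ℕ)]'t.isLt = purchase h := by
        simp only [ht]; exact hget_last
      rw [hg]
      rw [htake _ (le_of_eq ht), ht, List.take_length] at ha
      cases a with
      | inspect k =>
        have hkl : k ∉ l := fun hk => ha (mem_map_inspect.mpr hk)
        show z k ≤ u h
        exact le_of_lt (lt_of_lt_of_le (hout k hkl) (min_le_right _ _))
      | purchase k =>
        obtain ⟨hk1, -⟩ := ha
        have hkl : k ∈ l := mem_map_inspect.mp hk1
        show u k ≤ u h
        by_cases hkh : k = h
        · subst hkh; exact le_refl _
        · exact le_of_lt (lt_of_lt_of_le (hgt k hkl hkh).2 (min_le_right _ _))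
  · -- all but last are inspections
    intro t ht
    have ht' : (t : ℕ) < l.length := by omega
    rw [List.get_eq_getElem, hget_lt t ht']
    exact ⟨_, rfl⟩

end SearchAction

open SearchAction in
/-- **Eventual Purchase Theorem** as a corollary of the partial ranking
representation: with pairwise distinct values, an optimal search process ends
with the purchase of `h` only if `h` has the highest effective value
`w j = min (z j) (u j)`; conversely, if `w h > w k` for all `k ≠ h`, some
optimal search process ends with the purchase of `h`. -/
theorem eventual_purchase_theorem
    {n : ℕ} (z u : Fin n → ℝ) (h : Fin n)
    (hdistinct : Function.Injective (val z u)) :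
    ((∀ seq : List (SearchAction n), IsOptimalSearchEndingIn z u h seq →
        ∀ k : Fin n, k ≠ h → min (z h) (u h) > min (z k) (u k)) ∧
     ((∀ k : Fin n, k ≠ h → min (z h) (u h) > min (z k) (u k)) →
        ∃ seq : List (SearchAction n), IsOptimalSearchEndingIn z u h seq)) := by
  constructor
  · -- forward direction
    intro seq hopt k hk
    obtain ⟨hne, havail, hmax, hinsp, hlast⟩ := hopt
    have hpos : 0 < seq.length := List.length_pos_iff.mpr hne
    set m := seq.length - 1 with hm
    have hmlt : m < seq.length := by omega
    have hgetlast : seq[m]'hmlt = purchase h := by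
      rw [List.getLast?_eq_getElem?, List.getElem?_eq_getElem hmlt] at hlast
      exact Option.some.inj hlast
    have htakeinsp : ∀ t : ℕ, t ≤ m → ∀ a ∈ seq.take t, ∃ j, a = inspect j := by
      intro t ht a hamem
      obtain ⟨i, hi, hia⟩ := List.mem_take_iff_getElem.mp hamem
      have hi2 : i < seq.length := lt_of_lt_of_le hi (min_le_right _ _)
      have hit : i < t := lt_of_lt_of_le hi (min_le_left _ _)
      obtain ⟨j, hj⟩ := hinsp ⟨i, hi2⟩ (by simp only [← hm]; omega)
      rw [List.get_eq_getElem] at hj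
      exact ⟨j, by rw [← hia, hj]⟩
    have hnopurch : ∀ t : ℕ, t ≤ m → ∀ j : Fin n, purchase j ∉ seq.take t := by
      intro t ht j hmem
      obtain ⟨j', hj'⟩ := htakeinsp t ht _ hmem
      cases hj'
    have hav := havail ⟨m, hmlt⟩
    rw [List.get_eq_getElem] at hav
    replace hav : available (List.take m seq) (purchase h) := by
      rw [← hgetlast]; exact hav
    obtain ⟨hinmem, -⟩ := hav
    obtain ⟨t0, ht0, hth⟩ := List.mem_take_iff_getElem.mp hinmem
    have ht0m : t0 < m := lt_of_lt_of_le ht0 (min_le_left _ _)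
    have ht0len : t0 < seq.length := by omega
    -- claim A : min (z k) (u k) < u h
    have hA : min (z k) (u k) < u h := by
      by_cases hkin : inspect k ∈ seq.take m
      · have hle := hmax ⟨m, hmlt⟩ (purchase k) ⟨hkin, hnopurch m le_rfl k⟩
        rw [List.get_eq_getElem] at hle
        replace hle : val z u (purchase k) ≤ val z u (purchase h) := by
          rw [← hgetlast]; exact hle
        have hlt : u k < u h := by
          rcases lt_or_eq_of_le hle with hlt | heq
          · exact hlt
          · exact absurd (hdistinct heq) (by simp [hk])
        exact lt_of_le_of_lt (min_le_right _ _) hlt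
      · have hle := hmax ⟨m, hmlt⟩ (inspect k) hkin
        rw [List.get_eq_getElem] at hle
        replace hle : val z u (inspect k) ≤ val z u (purchase h) := by
          rw [← hgetlast]; exact hle
        have hlt : z k < u h := by
          rcases lt_or_eq_of_le hle with hlt | heq
          · exact hlt
          · exact absurd (hdistinct heq) (by simp)
        exact lt_of_le_of_lt (min_le_left _ _) hlt
    -- claim B : min (z k) (u k) < z h
    have hB : min (z k) (u k) < z h := by
      by_cases hkin : inspect k ∈ seq.take t0
      · have hle := hmax ⟨t0, ht0len⟩ (purchase k) ⟨hkin, hnopurch t0 ht0m.le k⟩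
        rw [List.get_eq_getElem] at hle
        replace hle : val z u (purchase k) ≤ val z u (inspect h) := by
          rw [← hth]; exact hle
        have hlt : u k < z h := by
          rcases lt_or_eq_of_le hle with hlt | heq
          · exact hlt
          · exact absurd (hdistinct heq) (by simp)
        exact lt_of_le_of_lt (min_le_right _ _) hlt
      · have hle := hmax ⟨t0, ht0len⟩ (inspect k) hkin
        rw [List.get_eq_getElem] at hle
        replace hle : val z u (inspect k) ≤ val z u (inspect h) := by
          rw [← hth]; exact hle
        have hlt : z k < z h := by
          rcases lt_or_eq_of_le hle with hlt | heq
          · exact hlt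
          · exact absurd (hdistinct heq) (by simp [hk])
        exact lt_of_le_of_lt (min_le_left _ _) hlt
    exact lt_min_iff.mpr ⟨hB, hA⟩
  · -- converse direction
    intro hbest
    classical
    set w := min (z h) (u h) with hw
    have hzinj : ∀ a b : Fin n, z a = z b → a = b := by
      intro a b hab
      have := hdistinct (a₁ := inspect a) (a₂ := inspect b) (by simpa [val] using hab)
      cases this; rfl
    have hzu : ∀ a b : Fin n, z a ≠ u b := by
      intro a b hab
      have := hdistinct (a₁ := inspect a) (a₂ := purchase b) (by simpa [val] using hab)
      cases this
    set l0 := (List.finRange n).filter (fun k => decide (w < z k) || decide (k = h))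
      with hl0
    haveI htot : IsTotal (Fin n) (fun a b => z b ≤ z a) :=
      ⟨fun a b => le_total (z b) (z a)⟩
    haveI htr : IsTrans (Fin n) (fun a b => z b ≤ z a) :=
      ⟨fun _ _ _ hab hbc => le_trans hbc hab⟩
    set l := l0.insertionSort (fun a b => z b ≤ z a) with hl
    have hmem : ∀ k : Fin n, k ∈ l ↔ (w < z k ∨ k = h) := by
      intro k
      rw [hl, List.mem_insertionSort, hl0, List.mem_filter]
      simp [List.mem_finRange]
    have hnd : l.Nodup := by
      rw [hl, (List.perm_insertionSort _ _).nodup_iff]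
      exact (List.nodup_finRange n).filter _
    have hsorted : l.Pairwise (fun a b => z b ≤ z a) :=
      List.pairwise_insertionSort _ l0
    have hstrict : l.Pairwise (fun a b => z b < z a) := by
      refine (hsorted.and hnd).imp ?_
      rintro a b ⟨hle, hne⟩
      exact lt_of_le_of_ne hle (fun he => hne (hzinj _ _ he.symm))
    have hmemh : h ∈ l := (hmem h).mpr (Or.inr rfl)
    have hgt : ∀ k ∈ l, k ≠ h → w < z k ∧ u k < w := by
      intro k hkl hkh
      have hzk : w < z k := by
        rcases (hmem k).mp hkl with hc | hc
        · exact hc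
        · exact absurd hc hkh
      refine ⟨hzk, ?_⟩
      have hmin := hbest k hkh
      rcases min_lt_iff.mp hmin with hc | hc
      · exact absurd hc (not_lt.mpr hzk.le)
      · exact hc
    have hout : ∀ k : Fin n, k ∉ l → z k < w := by
      intro k hkl
      have hk' : ¬(w < z k ∨ k = h) := fun hc => hkl ((hmem k).mpr hc)
      push_neg at hk'
      obtain ⟨hle, hkh⟩ := hk'
      rcases lt_or_eq_of_le hle with hlt | heq
      · exact hlt
      · exfalso
        rcases min_cases (z h) (u h) with ⟨he, -⟩ | ⟨he, -⟩
        · rw [hw, he] at heq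
          exact hkh (hzinj _ _ heq)
        · rw [hw, he] at heq
          exact hzu k h heq
    exact ⟨_, construction z u h l hstrict hmemh hgt hout⟩
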